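/- Construction of antiperiodic positive SL2-tilings from two Farey polygons and a totally positive matrix: let n, m ≥ 3, let (v_0, …, v_{n−1}) be a Farey n-gon with quiddity (q_0, …, q_{n−1}) and (v'_0, …, v'_{m−1}) a Farey m-gon with quiddity (q'_0, …, q'_{m−1}). Let a, b, c, d be positive integers with ad − bc = 1, q_0·a < b, and q'_0·a < c. If T : ℤ×ℤ → ℤ satisfies T(0,0) = a, T(0,1) = b, T(1,0) = c, T(1,1) = d, and for all (i,j): T(i,j+1) = q_{j mod n}·T(i,j) − T(i,j−1) and T(i+1,j) = q'_{i mod m}·T(i,j) − T(i−1,j), then T is an (n,m)-antiperiodic SL2-tiling and T(i,j) > 0 for all 0 ≤ i ≤ m−1, 0 ≤ j ≤ n−1. -/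

import Mathlib

/-- `fdet (a,b) (c,d) = a*d - b*c`. -/
def fdet (u v : ℤ × ℤ) : ℤ := u.1 * v.2 - u.2 * v.1

/-- A primitive vector `(a,b) ∈ ℤ²`: `gcd(a,b) = 1`, `b ≥ 0`, and `a = 1` whenever `b = 0`. -/
def IsPrimitive (u : ℤ × ℤ) : Prop := Int.gcd u.1 u.2 = 1 ∧ 0 ≤ u.2 ∧ (u.2 = 0 → u.1 = 1)

/-- A Farey `n`-gon: primitive vectors `v 0, …, v (n-1)` with `det(v i, v j) > 0`
for `i < j < n`, `det(v i, v (i+1)) = 1` for `i + 1 < n`, and `det(v 0, v (n-1)) = 1`. -/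
def IsFareyPolygon (n : ℕ) (v : ℕ → ℤ × ℤ) : Prop :=
  (∀ i < n, IsPrimitive (v i)) ∧
  (∀ i j, i < j → j < n → 0 < fdet (v i) (v j)) ∧
  (∀ i, i + 1 < n → fdet (v i) (v (i + 1)) = 1) ∧
  fdet (v 0) (v (n - 1)) = 1

/-- An SL2-tiling: every adjacent 2×2 minor equals 1. -/
def IsSL2Tiling (a : ℤ → ℤ → ℤ) : Prop :=
  ∀ i j : ℤ, a i j * a (i + 1) (j + 1) - a i (j + 1) * a (i + 1) j = 1

/-- An `(n,m)`-antiperiodic array: rows are `n`-antiperiodic, columns `m`-antiperiodic. -/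
def IsAntiperiodic (n m : ℕ) (a : ℤ → ℤ → ℤ) : Prop :=
  ∀ i j : ℤ, a i (j + (n : ℤ)) = -a i j ∧ a (i + (m : ℤ)) j = -a i j

/-- A positive `m × n` fundamental rectangle: `a i j > 0` for `0 ≤ i ≤ m-1`, `0 ≤ j ≤ n-1`. -/
def HasPosRect (n m : ℕ) (a : ℤ → ℤ → ℤ) : Prop :=
  ∀ i j : ℤ, 0 ≤ i → i ≤ (m : ℤ) - 1 → 0 ≤ j → j ≤ (n : ℤ) - 1 → 0 < a i j

lemma fdet_self (u : ℤ × ℤ) : fdet u u = 0 := by simp [fdet]; ring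
lemma fdet_skew (u w : ℤ × ℤ) : fdet u w = -fdet w u := by simp [fdet]; ring
lemma fdet_smul_right (l : ℤ) (u w : ℤ × ℤ) : fdet u (l • w) = l * fdet u w := by
  simp [fdet, Prod.smul_def, smul_eq_mul]; ring
lemma fdet_smul_left (l : ℤ) (u w : ℤ × ℤ) : fdet (l • u) w = l * fdet u w := by
  simp [fdet, Prod.smul_def, smul_eq_mul]; ring
lemma fdet_add_right (u w z : ℤ × ℤ) : fdet u (w + z) = fdet u w + fdet u z := by
  simp [fdet, Prod.fst_add, Prod.snd_add]; ring
lemma fdet_add_left (u w z : ℤ × ℤ) : fdet (u + w) z = fdet u z + fdet w z := by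
  simp [fdet, Prod.fst_add, Prod.snd_add]; ring
lemma fdet_sub_right (u w z : ℤ × ℤ) : fdet u (w - z) = fdet u w - fdet u z := by
  simp [fdet, Prod.fst_sub, Prod.snd_sub]; ring
lemma fdet_sub_left (u w z : ℤ × ℤ) : fdet (u - w) z = fdet u z - fdet w z := by
  simp [fdet, Prod.fst_sub, Prod.snd_sub]; ring
lemma fdet_neg_right (u w : ℤ × ℤ) : fdet u (-w) = - fdet u w := by
  simp [fdet]; ring

lemma primitive_div (p u : ℤ × ℤ) (hp : IsPrimitive p) (h : fdet p u = 0) :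
    ∃ l : ℤ, u = l • p := by
  obtain ⟨hg, -, -⟩ := hp
  set A := Int.gcdA p.1 p.2
  set B := Int.gcdB p.1 p.2
  have hb : (1 : ℤ) = p.1 * A + p.2 * B := by
    have := Int.gcd_eq_gcd_ab p.1 p.2
    rw [hg] at this; exact_mod_cast this
  refine ⟨A * u.1 + B * u.2, ?_⟩
  have h' : p.1 * u.2 - p.2 * u.1 = 0 := h
  ext
  · show u.1 = (A * u.1 + B * u.2) * p.1
    linear_combination u.1 * hb - B * h'
  · show u.2 = (A * u.1 + B * u.2) * p.2
    linear_combination u.2 * hb + A * h'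

section Polygon

variable {n : ℕ} {v : ℕ → ℤ × ℤ} {q : ℕ → ℤ}

lemma quid_mid (hn : 3 ≤ n) (hF : IsFareyPolygon n v)
    (hq : ∀ i, q i = ((fdet (v ((i + n - 1) % n)) (v ((i + 1) % n))).natAbs : ℤ))
    (j : ℕ) (hj1 : 1 ≤ j) (hj2 : j + 1 < n) :
    v (j - 1) + v (j + 1) = q j • v j := by
  obtain ⟨hprim, hpos, hadj, hlast⟩ := hF
  have d1 : fdet (v (j - 1)) (v j) = 1 := by
    have := hadj (j - 1) (by omega)
    rwa [Nat.sub_add_cancel hj1] at this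
  have d2 : fdet (v j) (v (j + 1)) = 1 := hadj j hj2
  have hz : fdet (v j) (v (j - 1) + v (j + 1)) = 0 := by
    rw [fdet_add_right, fdet_skew (v j) (v (j - 1)), d1, d2]; ring
  obtain ⟨l, hl⟩ := primitive_div (v j) _ (hprim j (by omega)) hz
  have hD : fdet (v (j - 1)) (v (j + 1)) = l := by
    have := congrArg (fdet (v (j - 1))) hl
    rw [fdet_add_right, fdet_self, fdet_smul_right, d1] at this
    linarith
  have hDpos : 0 < fdet (v (j - 1)) (v (j + 1)) := hpos (j - 1) (j + 1) (by omega) (by omega)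
  have hqj : q j = l := by
    have e1 : (j + n - 1) % n = j - 1 := by
      rw [show j + n - 1 = (j - 1) + n by omega, Nat.add_mod_right]
      exact Nat.mod_eq_of_lt (by omega)
    have e2 : (j + 1) % n = j + 1 := Nat.mod_eq_of_lt (by omega)
    rw [hq j, e1, e2, ← hD, Int.natAbs_of_nonneg hDpos.le]
  rw [hqj, ← hl]

lemma quid_zero (hn : 3 ≤ n) (hF : IsFareyPolygon n v)
    (hq : ∀ i, q i = ((fdet (v ((i + n - 1) % n)) (v ((i + 1) % n))).natAbs : ℤ)) :
    v 1 = q 0 • v 0 + v (n - 1) := by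
  obtain ⟨hprim, hpos, hadj, hlast⟩ := hF
  have d1 : fdet (v 0) (v 1) = 1 := hadj 0 (by omega)
  have hz : fdet (v 0) (v 1 - v (n - 1)) = 0 := by
    rw [fdet_sub_right, d1, hlast]; ring
  obtain ⟨l, hl⟩ := primitive_div (v 0) _ (hprim 0 (by omega)) hz
  have hDpos : 0 < fdet (v 1) (v (n - 1)) := hpos 1 (n - 1) (by omega) (by omega)
  have hD : fdet (v 1) (v (n - 1)) = l := by
    have := congrArg (fun w => fdet w (v 1)) hl
    simp only [fdet_sub_left, fdet_smul_left, d1] at this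
    rw [fdet_self, fdet_skew (v (n-1)) (v 1)] at this
    linarith
  have hq0 : q 0 = l := by
    have e1 : (0 + n - 1) % n = n - 1 := by
      rw [Nat.zero_add]; exact Nat.mod_eq_of_lt (by omega)
    have e2 : (0 + 1) % n = 1 := Nat.mod_eq_of_lt (by omega)
    rw [hq 0, e1, e2, fdet_skew (v (n-1)) (v 1), Int.natAbs_neg, ← hD,
      Int.natAbs_of_nonneg hDpos.le]
  rw [hq0, ← hl]
  abel

lemma quid_last (hn : 3 ≤ n) (hF : IsFareyPolygon n v)
    (hq : ∀ i, q i = ((fdet (v ((i + n - 1) % n)) (v ((i + 1) % n))).natAbs : ℤ)) :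
    v (n - 2) - v 0 = q (n - 1) • v (n - 1) := by
  obtain ⟨hprim, hpos, hadj, hlast⟩ := hF
  have d1 : fdet (v (n - 2)) (v (n - 1)) = 1 := by
    have := hadj (n - 2) (by omega)
    rwa [show n - 2 + 1 = n - 1 by omega] at this
  have hz : fdet (v (n - 1)) (v (n - 2) - v 0) = 0 := by
    rw [fdet_sub_right, fdet_skew (v (n-1)) (v (n-2)), d1,
      fdet_skew (v (n-1)) (v 0), hlast]; ring
  obtain ⟨l, hl⟩ := primitive_div (v (n - 1)) _ (hprim (n - 1) (by omega)) hz
  have hDpos : 0 < fdet (v 0) (v (n - 2)) := hpos 0 (n - 2) (by omega) (by omega)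
  have hD : fdet (v 0) (v (n - 2)) = l := by
    have := congrArg (fdet (v (n - 2))) hl
    rw [fdet_sub_right, fdet_self, fdet_smul_right, d1,
      fdet_skew (v (n-2)) (v 0)] at this
    linarith
  have hqn : q (n - 1) = l := by
    have e1 : (n - 1 + n - 1) % n = n - 2 := by
      rw [show n - 1 + n - 1 = (n - 2) + n by omega, Nat.add_mod_right]
      exact Nat.mod_eq_of_lt (by omega)
    have e2 : (n - 1 + 1) % n = 0 := by
      rw [show n - 1 + 1 = n by omega, Nat.mod_self]
    rw [hq (n - 1), e1, e2, fdet_skew (v (n-2)) (v 0), Int.natAbs_neg, ← hD,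
      Int.natAbs_of_nonneg hDpos.le]
  rw [hqn, ← hl]

end Polygon

def Wv (n : ℕ) (v : ℕ → ℤ × ℤ) (j : ℤ) : ℤ × ℤ :=
  (((j / (n : ℤ)).negOnePow : ℤ)) • v ((j % (n : ℤ)).toNat)

lemma Wv_anti {n : ℕ} (hn : 0 < n) (v : ℕ → ℤ × ℤ) (j : ℤ) :
    Wv n v (j + n) = -Wv n v j := by
  have hd : (j + (n : ℤ)) / n = j / n + 1 := by
    have := Int.add_mul_ediv_right j 1 (by exact_mod_cast hn.ne' : (n : ℤ) ≠ 0)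
    simpa using this
  have hm : (j + (n : ℤ)) % n = j % n := by
    have := Int.add_mul_emod_self_left (a := j) (b := (n : ℤ)) (c := 1)
    simpa using this
  simp [Wv, hd, hm, Int.negOnePow_succ, neg_smul]

lemma Wv_eq {n : ℕ} (v : ℕ → ℤ × ℤ) (j : ℤ) (h0 : 0 ≤ j) (h1 : j < n) :
    Wv n v j = v j.toNat := by
  rw [Wv, Int.ediv_eq_zero_of_lt h0 h1, Int.emod_eq_of_lt h0 h1]
  simp

lemma Wv_neg_one {n : ℕ} (hn : 3 ≤ n) (v : ℕ → ℤ × ℤ) :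
    Wv n v (-1) = -v (n - 1) := by
  have h : (-1 : ℤ) / n = -1 ∧ (-1 : ℤ) % n = (n : ℤ) - 1 := by
    rw [Int.ediv_emod_unique (by exact_mod_cast (by omega : 0 < n))]
    constructor
    · ring
    · constructor <;> [omega; omega]
  rw [Wv, h.1, h.2]
  have : ((n : ℤ) - 1).toNat = n - 1 := by omega
  rw [this]
  simp [Int.negOnePow]

lemma Wv_n {n : ℕ} (hn : 3 ≤ n) (v : ℕ → ℤ × ℤ) :
    Wv n v n = -v 0 := by
  have h0 : ((n : ℤ)) / n = 1 := Int.ediv_self (show (n:ℤ) ≠ 0 by exact_mod_cast (by omega : n ≠ 0))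
  have h1 : ((n : ℤ)) % n = 0 := Int.emod_self
  rw [Wv, h0, h1]
  simp

lemma Wv_rec {n : ℕ} {v : ℕ → ℤ × ℤ} {q : ℕ → ℤ} (hn : 3 ≤ n) (hF : IsFareyPolygon n v)
    (hq : ∀ i, q i = ((fdet (v ((i + n - 1) % n)) (v ((i + 1) % n))).natAbs : ℤ)) :
    ∀ j : ℤ, Wv n v (j + 1) = q ((j % (n : ℤ)).toNat) • Wv n v j - Wv n v (j - 1) := by
  set P : ℤ → Prop :=
    fun j => Wv n v (j + 1) = q ((j % (n : ℤ)).toNat) • Wv n v j - Wv n v (j - 1) with hP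
  have hnpos : 0 < n := by omega
  have hmod : ∀ j : ℤ, (j + (n : ℤ)) % n = j % n := by
    intro j
    have := Int.add_mul_emod_self_left (a := j) (b := (n : ℤ)) (c := 1)
    simpa using this
  have base : ∀ r : ℕ, r < n → P r := by
    intro r hr
    have hjm : (((r : ℤ)) % (n : ℤ)).toNat = r := by
      rw [Int.emod_eq_of_lt (by positivity) (by exact_mod_cast hr)]; simp
    have hWr : Wv n v r = v r := by
      rw [Wv_eq v r (by positivity) (by exact_mod_cast hr)]; simp
    show Wv n v ((r : ℤ) + 1) = q (((r : ℤ) % (n : ℤ)).toNat) • Wv n v r - Wv n v ((r : ℤ) - 1)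
    rw [hjm, hWr]
    rcases eq_or_ne r 0 with h0 | h0
    · subst h0
      have hW1 : Wv n v ((0 : ℕ) + 1 : ℤ) = v 1 := by
        rw [show (((0:ℕ) : ℤ) + 1) = ((1:ℕ) : ℤ) by norm_num,
          Wv_eq v _ (by positivity) (by exact_mod_cast (by omega : 1 < n))]
        norm_num
      have hW2 : Wv n v ((0 : ℕ) - 1 : ℤ) = -v (n - 1) := by
        rw [show (((0:ℕ) : ℤ) - 1) = (-1 : ℤ) by norm_num, Wv_neg_one hn v]
      rw [hW1, hW2, quid_zero hn hF hq]
      abel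
    · rcases eq_or_ne r (n - 1) with hl | hl
      · subst hl
        have hW1 : Wv n v (((n - 1 : ℕ) : ℤ) + 1) = -v 0 := by
          rw [show (((n - 1 : ℕ) : ℤ) + 1) = ((n : ℕ) : ℤ) by push_cast [(by omega : 1 ≤ n)]; ring,
            Wv_n hn v]
        have hW2 : Wv n v (((n - 1 : ℕ) : ℤ) - 1) = v (n - 2) := by
          rw [show (((n - 1 : ℕ) : ℤ) - 1) = ((n - 2 : ℕ) : ℤ) by push_cast [(by omega : 1 ≤ n), (by omega : 2 ≤ n)]; ring,
            Wv_eq v _ (by positivity) (by exact_mod_cast (by omega : n - 2 < n))]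
          norm_num
        rw [hW1, hW2, ← quid_last hn hF hq]
        abel
      · have h1 : 1 ≤ r := by omega
        have h2 : r + 1 < n := by omega
        have hW1 : Wv n v ((r : ℤ) + 1) = v (r + 1) := by
          rw [show ((r:ℤ) + 1) = ((r + 1 : ℕ) : ℤ) by push_cast; ring,
            Wv_eq v _ (by positivity) (by exact_mod_cast h2)]
          norm_num
        have hW2 : Wv n v ((r : ℤ) - 1) = v (r - 1) := by
          rw [show ((r:ℤ) - 1) = ((r - 1 : ℕ) : ℤ) by push_cast [h1]; ring,
            Wv_eq v _ (by positivity) (by exact_mod_cast (by omega : r - 1 < n))]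
          norm_num
        rw [hW1, hW2, ← quid_mid hn hF hq r h1 h2]
        abel
  have shift : ∀ j : ℤ, P j ↔ P (j + n) := by
    intro j
    have e1 : j + (n : ℤ) + 1 = (j + 1) + n := by ring
    have e2 : j + (n : ℤ) - 1 = (j - 1) + n := by ring
    constructor
    · intro h
      show Wv n v (j + (n:ℤ) + 1) = _
      rw [e1, e2, Wv_anti hnpos, Wv_anti hnpos, Wv_anti hnpos, hmod, h]
      rw [smul_neg]; abel
    · intro h
      have h' : Wv n v ((j+1) + (n:ℤ)) = q ((j % (n:ℤ)).toNat) • Wv n v (j + n) - Wv n v ((j-1) + n) := by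
        rw [← e1, ← e2, ← hmod j]; exact h
      rw [Wv_anti hnpos, Wv_anti hnpos, Wv_anti hnpos, smul_neg] at h'
      have := congrArg Neg.neg h'
      simp only [neg_neg] at this
      show Wv n v (j + 1) = _
      rw [this]; abel
  have main : ∀ k : ℤ, ∀ r : ℕ, r < n → P (r + n * k) := by
    intro k
    induction k using Int.induction_on with
    | zero => intro r hr; simpa using base r hr
    | succ i ih =>
      intro r hr
      have := (shift ((r : ℤ) + n * i)).mp (ih r hr)
      rwa [show (r : ℤ) + n * i + n = r + n * (i + 1) by ring] at this
    | pred i ih =>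
      intro r hr
      have := (shift ((r : ℤ) + n * (-(i:ℤ) - 1))).mpr
        (by rw [show (r : ℤ) + n * (-(i:ℤ) - 1) + n = r + n * (-(i:ℤ)) by ring]; exact ih r hr)
      exact this
  intro j
  have hr : ((j % (n : ℤ)).toNat : ℤ) = j % n :=
    Int.toNat_of_nonneg (Int.emod_nonneg j (by exact_mod_cast hnpos.ne'))
  have := main (j / n) (j % (n : ℤ)).toNat
    (by have := Int.emod_lt_of_pos j (by exact_mod_cast hnpos : (0:ℤ) < n); omega)
  rwa [hr, Int.emod_add_mul_ediv j n] at this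

section Seq

variable {n : ℕ} {v : ℕ → ℤ × ℤ} {q : ℕ → ℤ}

lemma const_of_step (f : ℤ → ℤ) (h : ∀ j : ℤ, f (j + 1) = f j) : ∀ j : ℤ, f j = f 0 := by
  intro j
  induction j using Int.induction_on with
  | zero => rfl
  | succ i ih => rw [h i, ih]
  | pred i ih => rw [← ih, ← h (-(i:ℤ) - 1)]; norm_num

lemma seq_unique (c : ℤ → ℤ) (x y : ℤ → ℤ)
    (hx : ∀ j : ℤ, x (j + 1) = c j * x j - x (j - 1))
    (hy : ∀ j : ℤ, y (j + 1) = c j * y j - y (j - 1))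
    (h0 : x 0 = y 0) (h1 : x 1 = y 1) : ∀ j : ℤ, x j = y j := by
  have key : ∀ j : ℤ, x j = y j ∧ x (j + 1) = y (j + 1) := by
    intro j
    induction j using Int.induction_on with
    | zero => exact ⟨h0, h1⟩
    | succ i ih =>
      refine ⟨ih.2, ?_⟩
      rw [hx (i + 1), hy (i + 1)]
      simp only [add_sub_cancel_right]
      rw [ih.1, ih.2]
    | pred i ih =>
      have hxi := hx (-(i : ℤ))
      have hyi := hy (-(i : ℤ))
      constructor
      · linear_combination hxi - hyi + c (-(i:ℤ)) * ih.1 - ih.2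
      · simp only [show (-(i:ℤ) - 1 + 1) = -(i:ℤ) by ring]
        exact ih.1
  exact fun j => (key j).1

lemma rep_lemma (hn : 3 ≤ n) (hF : IsFareyPolygon n v)
    (hq : ∀ i, q i = ((fdet (v ((i + n - 1) % n)) (v ((i + 1) % n))).natAbs : ℤ))
    (x : ℤ → ℤ)
    (hx : ∀ j : ℤ, x (j + 1) = q ((j % (n : ℤ)).toNat) * x j - x (j - 1)) :
    ∀ j : ℤ, x j = x 1 * fdet (Wv n v 0) (Wv n v j) - x 0 * fdet (Wv n v 1) (Wv n v j) := by
  have hnpos : 0 < n := by omega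
  have hW0 : Wv n v 0 = v 0 := by
    rw [Wv_eq v 0 le_rfl (by exact_mod_cast hnpos)]; norm_num
  have hW1 : Wv n v 1 = v 1 := by
    rw [Wv_eq v 1 (by norm_num) (by exact_mod_cast (by omega : 1 < n))]; norm_num
  have hadj01 : fdet (v 0) (v 1) = 1 := hF.2.2.1 0 (by omega)
  refine seq_unique (fun j => q ((j % (n : ℤ)).toNat)) x _ hx ?_ ?_ ?_
  · intro j
    have hw := Wv_rec hn hF hq j
    simp only [hw, fdet_sub_right, fdet_smul_right]
    ring
  · simp only [fdet_self, hW0, hW1, fdet_skew (v 1) (v 0), hadj01]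
    ring
  · simp only [fdet_self, hW0, hW1, hadj01]
    ring

lemma anti_lemma (hn : 3 ≤ n) (hF : IsFareyPolygon n v)
    (hq : ∀ i, q i = ((fdet (v ((i + n - 1) % n)) (v ((i + 1) % n))).natAbs : ℤ))
    (x : ℤ → ℤ)
    (hx : ∀ j : ℤ, x (j + 1) = q ((j % (n : ℤ)).toNat) * x j - x (j - 1)) :
    ∀ j : ℤ, x (j + n) = -x j := by
  intro j
  have hnpos : 0 < n := by omega
  rw [rep_lemma hn hF hq x hx (j + n), rep_lemma hn hF hq x hx j,
    Wv_anti hnpos v j, fdet_neg_right, fdet_neg_right]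
  ring

lemma pos1d (hn : 3 ≤ n) (hF : IsFareyPolygon n v)
    (hq : ∀ i, q i = ((fdet (v ((i + n - 1) % n)) (v ((i + 1) % n))).natAbs : ℤ))
    (x : ℤ → ℤ)
    (hx : ∀ j : ℤ, x (j + 1) = q ((j % (n : ℤ)).toNat) * x j - x (j - 1))
    (h0 : 0 < x 0) (h1 : q 0 * x 0 < x 1) :
    ∀ j : ℤ, 0 ≤ j → j ≤ (n : ℤ) - 1 → 0 < x j := by
  intro j hj0 hj1
  have hnpos : 0 < n := by omega
  have hncast : (0 : ℤ) < (n : ℤ) := by exact_mod_cast hnpos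
  have hjn : j < (n : ℤ) := by omega
  set r := j.toNat with hr
  have hjr : (r : ℤ) = j := Int.toNat_of_nonneg hj0
  have hrn : r < n := by omega
  have hW0 : Wv n v 0 = v 0 := by
    rw [Wv_eq v 0 le_rfl hncast]; norm_num
  have hW1 : Wv n v 1 = v 1 := by
    rw [Wv_eq v 1 (by norm_num) (by exact_mod_cast (by omega : 1 < n))]; norm_num
  have hWj : Wv n v j = v r := by rw [Wv_eq v j hj0 hjn]
  have hrep := rep_lemma hn hF hq x hx j
  rw [hW0, hW1, hWj] at hrep
  obtain ⟨hprim, hpos, hadj, hlast⟩ := hF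
  have hadj01 : fdet (v 0) (v 1) = 1 := hadj 0 (by omega)
  have hq0nn : 0 ≤ q 0 := by rw [hq 0]; positivity
  rcases eq_or_ne r 0 with h | h
  · rw [h] at hrep
    rw [hrep, fdet_self, fdet_skew (v 1) (v 0), hadj01]
    linarith
  rcases eq_or_ne r 1 with h' | h'
  · rw [h'] at hrep
    rw [hrep, fdet_self, hadj01]
    nlinarith [mul_nonneg hq0nn h0.le]
  · have hr2 : 2 ≤ r := by omega
    have hP : 0 < fdet (v 0) (v r) := hpos 0 r (by omega) hrn
    have hQ : fdet (v 1) (v r) = q 0 * fdet (v 0) (v r) + fdet (v (n - 1)) (v r) := by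
      rw [quid_zero hn ⟨hprim, hpos, hadj, hlast⟩ hq, fdet_add_left, fdet_smul_left]
    have hD : 0 ≤ fdet (v r) (v (n - 1)) := by
      rcases eq_or_ne r (n - 1) with h'' | h''
      · rw [h'', fdet_self]
      · exact (hpos r (n - 1) (by omega) (by omega)).le
    have hsk : fdet (v (n - 1)) (v r) = -fdet (v r) (v (n - 1)) := fdet_skew _ _
    rw [hrep, hQ, hsk]
    nlinarith [mul_pos (sub_pos.mpr h1) hP, mul_nonneg h0.le hD]

end Seq


/-- Construction of antiperiodic positive SL2-tilings from the quiddities of two Farey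
polygons and a totally positive unimodular matrix: the array `T` generated by the double
recurrence with coefficients the two quiddities and initial block `[[a,b],[c,d]]`
(where `ad − bc = 1`, `q₀·a < b`, `q'₀·a < c`) is an `(n,m)`-antiperiodic SL2-tiling
with positive `m × n` fundamental rectangle. -/
theorem stmt17 (n m : ℕ) (hn : 3 ≤ n) (hm : 3 ≤ m)
    (v v' : ℕ → ℤ × ℤ) (hv : IsFareyPolygon n v) (hv' : IsFareyPolygon m v')
    (q q' : ℕ → ℤ)
    (hq : ∀ i, q i = ((fdet (v ((i + n - 1) % n)) (v ((i + 1) % n))).natAbs : ℤ))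
    (hq' : ∀ i, q' i = ((fdet (v' ((i + m - 1) % m)) (v' ((i + 1) % m))).natAbs : ℤ))
    (a b c d : ℤ) (ha : 0 < a) (hb : 0 < b) (hc : 0 < c) (hd : 0 < d)
    (hdet : a * d - b * c = 1) (h1 : q 0 * a < b) (h2 : q' 0 * a < c)
    (T : ℤ → ℤ → ℤ)
    (hT00 : T 0 0 = a) (hT01 : T 0 1 = b) (hT10 : T 1 0 = c) (hT11 : T 1 1 = d)
    (hrow : ∀ i j : ℤ, T i (j + 1) = q ((j % (n : ℤ)).toNat) * T i j - T i (j - 1))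
    (hcol : ∀ i j : ℤ, T (i + 1) j = q' ((i % (m : ℤ)).toNat) * T i j - T (i - 1) j) :
    IsSL2Tiling T ∧ IsAntiperiodic n m T ∧ HasPosRect n m T := by
  have sl2 : IsSL2Tiling T := by
    have grow : ∀ i j : ℤ, T i j * T (i+1) (j+1) - T i (j+1) * T (i+1) j
        = T i 0 * T (i+1) 1 - T i 1 * T (i+1) 0 := by
      intro i j
      have hstep : ∀ k : ℤ,
          (fun j => T i j * T (i+1) (j+1) - T i (j+1) * T (i+1) j) (k+1)
          = (fun j => T i j * T (i+1) (j+1) - T i (j+1) * T (i+1) j) k := by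
        intro k
        simp only
        rw [hrow i (k+1), hrow (i+1) (k+1)]
        simp only [add_sub_cancel_right]
        ring
      have := const_of_step (fun j => T i j * T (i+1) (j+1) - T i (j+1) * T (i+1) j) hstep j
      simpa using this
    have gcol : ∀ i : ℤ, T i 0 * T (i+1) 1 - T i 1 * T (i+1) 0
        = T 0 0 * T 1 1 - T 0 1 * T 1 0 := by
      intro i
      have hstep : ∀ k : ℤ,
          (fun i => T i 0 * T (i+1) 1 - T i 1 * T (i+1) 0) (k+1)
          = (fun i => T i 0 * T (i+1) 1 - T i 1 * T (i+1) 0) k := by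
        intro k
        simp only
        rw [hcol (k+1) 0, hcol (k+1) 1]
        simp only [add_sub_cancel_right]
        ring
      have := const_of_step (fun i => T i 0 * T (i+1) 1 - T i 1 * T (i+1) 0) hstep i
      simpa using this
    intro i j
    rw [grow i j, gcol i, hT00, hT01, hT10, hT11]
    linarith
  have antirow : ∀ i j : ℤ, T i (j + (n : ℤ)) = -T i j := fun i =>
    anti_lemma hn hv hq (fun j => T i j) (fun j => hrow i j)
  have anticol : ∀ j i : ℤ, T (i + (m : ℤ)) j = -T i j := fun j =>
    anti_lemma hm hv' hq' (fun i => T i j) (fun i => hcol i j)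
  refine ⟨sl2, fun i j => ⟨antirow i j, anticol j i⟩, ?_⟩
  -- positivity
  have row0 : ∀ j : ℤ, 0 ≤ j → j ≤ (n : ℤ) - 1 → 0 < T 0 j :=
    pos1d hn hv hq (fun j => T 0 j) (fun j => hrow 0 j)
      (by simpa [hT00] using ha) (by simpa [hT00, hT01] using h1)
  set z : ℤ → ℤ := fun j => T 1 j - q' 0 * T 0 j with hz
  have hzrec : ∀ j : ℤ, z (j + 1) = q ((j % (n : ℤ)).toNat) * z j - z (j - 1) := by
    intro j
    simp only [hz]
    rw [hrow 1 j, hrow 0 j]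
    ring
  have hz0 : 0 < z 0 := by
    simp only [hz, hT00, hT10]
    linarith
  have hz1 : q 0 * z 0 < z 1 := by
    have key : a * (z 1 - q 0 * z 0) = 1 + (b - q 0 * a) * (c - q' 0 * a) := by
      simp only [hz, hT00, hT01, hT10, hT11]
      linear_combination hdet
    nlinarith [mul_pos (sub_pos.mpr h1) (sub_pos.mpr h2)]
  have zpos : ∀ j : ℤ, 0 ≤ j → j ≤ (n : ℤ) - 1 → 0 < z j :=
    pos1d hn hv hq z hzrec hz0 hz1
  intro i j hi0 hi1 hj0 hj1
  have hT0j := row0 j hj0 hj1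
  rcases eq_or_ne i 0 with h | h
  · rw [h]; exact hT0j
  -- 1 ≤ i ≤ m - 1
  have hmpos : 0 < m := by omega
  have hmcast : (0 : ℤ) < (m : ℤ) := by exact_mod_cast hmpos
  have him : i < (m : ℤ) := by omega
  set it := i.toNat with hit
  have hitc : (it : ℤ) = i := Int.toNat_of_nonneg hi0
  have hit1 : 1 ≤ it := by omega
  have hitm : it < m := by omega
  have hW0 : Wv m v' 0 = v' 0 := by
    rw [Wv_eq v' 0 le_rfl hmcast]; norm_num
  have hW1 : Wv m v' 1 = v' 1 := by
    rw [Wv_eq v' 1 (by norm_num) (by exact_mod_cast (by omega : 1 < m))]; norm_num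
  have hWi : Wv m v' i = v' it := by rw [Wv_eq v' i hi0 him]
  have repc := rep_lemma hm hv' hq' (fun i => T i j) (fun i => hcol i j) i
  simp only [hW0, hW1, hWi] at repc
  -- repc : T i j = T 1 j * fdet (v' 0) (v' it) - T 0 j * fdet (v' 1) (v' it)
  have hP : 0 < fdet (v' 0) (v' it) := hv'.2.1 0 it (by omega) hitm
  have hQ : fdet (v' 1) (v' it) = q' 0 * fdet (v' 0) (v' it) + fdet (v' (m - 1)) (v' it) := by
    rw [quid_zero hm hv' hq', fdet_add_left, fdet_smul_left]
  have hD : 0 ≤ fdet (v' it) (v' (m - 1)) := by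
    rcases eq_or_ne it (m - 1) with h'' | h''
    · rw [h'', fdet_self]
    · exact (hv'.2.1 it (m - 1) (by omega) (by omega)).le
  have hsk : fdet (v' (m - 1)) (v' it) = -fdet (v' it) (v' (m - 1)) := fdet_skew _ _
  have hzj := zpos j hj0 hj1
  simp only [hz] at hzj
  rw [repc, hQ, hsk]
  nlinarith [mul_pos hzj hP, mul_nonneg hT0j.le hD]
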